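/- There is a primitive recursive function B : ℕ² → ℕ such that for all d ≥ 1 and ℓ ∈ ℕ: if T̄ = (T₀, …, T_{d−1}) is a strong d-forest of depth B(d,ℓ), then for every coloring f of the 2-element subsets of Leaves(T₀) ∪ ⋯ ∪ Leaves(T_{d−1}) with 2 colors, there exists S̄ = (S₀, …, S_{d−1}) ∈ Str^l_ℓ(T̄) such that for all i, j < d, all σ, σ' ∈ Leaves(S_i) and all τ, τ' ∈ Leaves(S_j) with σ ≠ τ and σ' ≠ τ', f({σ,τ}) = f({σ',τ'}). -/

import Mathlib

/-- `(T, f, h)` witnesses a strong `d`-forest of depth `ℓ`: `h` is the level function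
and `f i` maps the complete binary tree `2^{≤ℓ}` into `T i`, preserving levels and
the branching structure. -/
def IsStrongForest (d ℓ : ℕ) (T : Fin d → Finset (List Bool))
    (f : Fin d → List Bool → List Bool) (h : ℕ → ℕ) : Prop :=
  (∀ i : Fin d, ∀ σ : List Bool, σ.length ≤ ℓ →
    f i σ ∈ T i ∧ (f i σ).length = h σ.length) ∧
  (∀ i : Fin d, ∀ σ : List Bool, σ.length < ℓ → ∀ j : Bool,
    (f i σ ++ [j]) <+: f i (σ ++ [j]))

/-- The leaves of the tree embedded by `f` at depth `ℓ`. -/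
def Leaves (ℓ : ℕ) (f : List Bool → List Bool) : Set (List Bool) :=
  {t | ∃ σ : List Bool, σ.length = ℓ ∧ f σ = t}


/-! ### Auxiliary machinery -/

/-! ### Bounds -/

/-- One Shelah block-size step. -/
def shStep (k r n' : ℕ) : ℕ → ℕ := fun P => P + r ^ ((k+2) ^ (P + n'))

/-- Quantitative Hales–Jewett bound (Shelah's argument). -/
def shB : ℕ → ℕ → ℕ
  | 0, _ => 1
  | 1, _ => 1
  | (k+2), r => (shStep k r (shB (k+1) r))^[shB (k+1) r] 0

/-- block size used in the main recursion -/
def Mstep (q r L : ℕ) : ℕ := shB (2 ^ q) (r ^ (L * q + q * q))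

/-- state step for the main bound: state = (remaining levels, number of trees, accumulated depth) -/
def mgmStep (r : ℕ) : ℕ × ℕ × ℕ → ℕ × ℕ × ℕ :=
  fun s => (s.1 - 1, s.2.1 * 2 ^ (Mstep s.2.1 r (s.1 - 1)), s.2.2 + Mstep s.2.1 r (s.1 - 1))

/-- The ambient depth needed for the main lemma with `q` trees, `r` colors, output depth `L`. -/
def mgmIn (q r L : ℕ) : ℕ := ((mgmStep r)^[L] (L, q, 0)).2.2

theorem mgmStep_iter_spec (r : ℕ) : ∀ (L s q a : ℕ),
    (mgmStep r)^[L] (s, q, a) =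
      ((s - L), ((mgmStep r)^[L] (s, q, 0)).2.1, a + ((mgmStep r)^[L] (s, q, 0)).2.2) := by
  intro L
  induction L with
  | zero => intro s q a; simp
  | succ L ih =>
    intro s q a
    rw [Function.iterate_succ_apply, Function.iterate_succ_apply (mgmStep r) L (s,q,0)]
    show (mgmStep r)^[L] (s - 1, q * 2 ^ (Mstep q r (s-1)), a + Mstep q r (s-1)) =
      (s - (L+1), ((mgmStep r)^[L] (s - 1, q * 2 ^ (Mstep q r (s-1)), 0 + Mstep q r (s-1))).2.1,
        a + ((mgmStep r)^[L] (s - 1, q * 2 ^ (Mstep q r (s-1)), 0 + Mstep q r (s-1))).2.2)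
    rw [ih (s-1) (q * 2 ^ (Mstep q r (s-1))) (0 + Mstep q r (s-1)),
        ih (s-1) (q * 2 ^ (Mstep q r (s-1))) (a + Mstep q r (s-1))]
    refine Prod.ext ?_ (Prod.ext rfl ?_)
    · simp; omega
    · simp; omega

theorem mgmIn_zero (q r : ℕ) : mgmIn q r 0 = 0 := rfl

theorem mgmIn_succ (q r L : ℕ) :
    mgmIn q r (L+1) = Mstep q r L + mgmIn (q * 2 ^ (Mstep q r L)) r L := by
  unfold mgmIn
  rw [Function.iterate_succ_apply]
  show ((mgmStep r)^[L] (L, q * 2 ^ Mstep q r (L+1-1), 0 + Mstep q r (L+1-1))).2.2 = _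
  rw [mgmStep_iter_spec]
  simp [Nat.add_comm]

/-! ### common prefix length -/

/-- length of the longest common prefix -/
def cpl : List Bool → List Bool → ℕ
  | a :: x, b :: y => if a = b then cpl x y + 1 else 0
  | _, _ => 0

@[simp] theorem cpl_nil_left (y : List Bool) : cpl [] y = 0 := by cases y <;> rfl
@[simp] theorem cpl_cons_same (a : Bool) (x y : List Bool) : cpl (a :: x) (a :: y) = cpl x y + 1 := by
  simp [cpl]
theorem cpl_cons_ne {a b : Bool} (h : a ≠ b) (x y : List Bool) : cpl (a :: x) (b :: y) = 0 := by
  simp [cpl, h]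

theorem cpl_lt_length : ∀ {x y : List Bool}, x.length = y.length → x ≠ y → cpl x y < x.length := by
  intro x
  induction x with
  | nil => intro y h hne; exact absurd ((List.length_eq_zero_iff).1 h.symm).symm hne
  | cons a x ih =>
    intro y h hne
    cases y with
    | nil => simp at h
    | cons b y =>
      by_cases hab : a = b
      · subst hab
        have : x ≠ y := by intro hh; exact hne (by rw [hh])
        have := ih (by simpa using h) this
        simp [cpl]; omega
      · rw [cpl_cons_ne hab]; simp

/-- decomposition along the common prefix -/
theorem cpl_decomp : ∀ {x y : List Bool}, cpl x y < x.length → cpl x y < y.length →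
    ∃ (p : List Bool) (u v : Bool) (x' y' : List Bool),
      p.length = cpl x y ∧ u ≠ v ∧ x = p ++ u :: x' ∧ y = p ++ v :: y' := by
  intro x
  induction x with
  | nil => intro y h _; simp at h
  | cons a x ih =>
    intro y hx hy
    cases y with
    | nil => simp at hy
    | cons b y =>
      by_cases hab : a = b
      · subst hab
        rw [cpl_cons_same] at hx hy
        obtain ⟨p, u, v, x', y', hp, huv, hx', hy'⟩ := ih (by simpa using hx) (by simpa using hy)
        exact ⟨a :: p, u, v, x', y', by simp [hp], huv, by simp [hx'], by simp [hy']⟩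
      · exact ⟨[], a, b, x, y, by simp [cpl_cons_ne hab], hab, rfl, rfl⟩

theorem cpl_of_append : ∀ (p : List Bool) {u v : Bool} (x y : List Bool), u ≠ v →
    cpl (p ++ u :: x) (p ++ v :: y) = p.length := by
  intro p
  induction p with
  | nil => intro u v x y h; simpa using cpl_cons_ne h x y
  | cons a p ih => intro u v x y h; simp [ih _ _ h]

/-- `cpl` of two lists having prefixes `w ++ [u]`, `w ++ [v]` with `u ≠ v` equals `w.length`. -/
theorem cpl_of_prefixes {w x y : List Bool} {u v : Bool} (hu : w ++ [u] <+: x) (hv : w ++ [v] <+: y)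
    (huv : u ≠ v) : cpl x y = w.length := by
  obtain ⟨x', hx⟩ := hu
  obtain ⟨y', hy⟩ := hv
  rw [← hx, ← hy]
  simpa using cpl_of_append w x' y' huv

/-! ### Strong embeddings of `2^{≤D}` into `2^{≤K}` -/

/-- a strong embedding of the complete binary tree of depth `D` into that of depth `K`,
with level function `h` (and leaves at the very top: `h D = K`). -/
def SEmb (D K : ℕ) (e : List Bool → List Bool) (h : ℕ → ℕ) : Prop :=
  (∀ σ : List Bool, σ.length ≤ D → (e σ).length = h σ.length) ∧
  (∀ σ : List Bool, σ.length < D → ∀ j : Bool, (e σ ++ [j]) <+: e (σ ++ [j])) ∧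
  h D = K

theorem cpl_self (z : List Bool) : cpl z z = z.length := by
  induction z with
  | nil => rfl
  | cons a z ih => simp [ih]

namespace SEmb

theorem len {D K e h} (H : SEmb D K e h) {σ : List Bool} (hσ : σ.length ≤ D) :
    (e σ).length = h σ.length := H.1 σ hσ

theorem step {D K e h} (H : SEmb D K e h) {σ : List Bool} (hσ : σ.length < D) (j : Bool) :
    (e σ ++ [j]) <+: e (σ ++ [j]) := H.2.1 σ hσ j

theorem top {D K e h} (H : SEmb D K e h) : h D = K := H.2.2

/-- monotonicity of `e` along prefixes -/
theorem ext {D K e h} (H : SEmb D K e h) :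
    ∀ {y x : List Bool}, x <+: y → y.length ≤ D → e x <+: e y := by
  intro y
  induction y using List.reverseRecOn with
  | nil => intro x hx _; rw [List.prefix_nil.1 hx]
  | append_singleton y j ih =>
    intro x hx hlen
    rcases List.prefix_concat_iff.1 hx with h1 | h1
    · rw [h1]
    · calc e x <+: e y := ih h1 (by simp at hlen; omega)
        _ <+: e y ++ [j] := List.prefix_append _ _
        _ <+: e (y ++ [j]) := H.step (by simp at hlen ⊢; omega) j

theorem h_lt {D K e h} (H : SEmb D K e h) {s : ℕ} (hs : s < D) : h s < h (s+1) := by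
  have h1 := H.len (σ := List.replicate s false) (by simp; omega)
  have h2 := H.len (σ := List.replicate s false ++ [false]) (by simp; omega)
  have h3 := H.step (σ := List.replicate s false) (by simp; omega) false
  have h4 : (e (List.replicate s false)).length + 1 ≤
      (e (List.replicate s false ++ [false])).length := by simpa using h3.length_le
  simp at h1 h2
  omega

theorem h_mono {D K e h} (H : SEmb D K e h) : ∀ {s t : ℕ}, s ≤ t → t ≤ D → h s ≤ h t := by
  intro s t hst htD
  induction t with
  | zero => simp at hst; simp [hst]
  | succ t ih =>
    rcases Nat.lt_or_ge s (t+1) with hlt | hge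
    · have := H.h_lt (s := t) (by omega)
      have := ih (by omega) (by omega)
      omega
    · have : s = t+1 := by omega
      simp [this]

theorem h_strict {D K e h} (H : SEmb D K e h) {s t : ℕ} (hst : s < t) (htD : t ≤ D) :
    h s < h t := by
  have h1 := H.h_lt (s := s) (by omega)
  have h2 := H.h_mono (s := s+1) (t := t) (by omega) htD
  omega

/-- where two leaves split -/
theorem cpl_eq {D K e h} (H : SEmb D K e h) {x y : List Bool}
    (hx : x.length = D) (hy : y.length = D) (hne : x ≠ y) :
    cpl (e x) (e y) = h (cpl x y) := by
  have hlt : cpl x y < x.length := cpl_lt_length (by omega) hne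
  obtain ⟨p, u, v, x', y', hp, huv, hxd, hyd⟩ := cpl_decomp hlt (by omega)
  have hpD : p.length < D := by omega
  have hu : e p ++ [u] <+: e x := by
    calc e p ++ [u] <+: e (p ++ [u]) := H.step hpD u
      _ <+: e x := H.ext (by rw [hxd]; exact ⟨x', by simp⟩) (by omega)
  have hv : e p ++ [v] <+: e y := by
    calc e p ++ [v] <+: e (p ++ [v]) := H.step hpD v
      _ <+: e y := H.ext (by rw [hyd]; exact ⟨y', by simp⟩) (by omega)
  rw [cpl_of_prefixes hu hv huv, H.len (by omega), hp]

theorem leaf_ne {D K e h} (H : SEmb D K e h) {x y : List Bool}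
    (hx : x.length = D) (hy : y.length = D) (hne : x ≠ y) : e x ≠ e y := by
  intro hcontra
  have h1 := H.cpl_eq hx hy hne
  rw [hcontra, cpl_self, H.len (by omega), hy] at h1
  have hlt : cpl x y < x.length := cpl_lt_length (by omega) hne
  have := H.h_strict (s := cpl x y) (t := D) (by omega) (le_refl _)
  omega

theorem comp {a b c e h e' h'} (H : SEmb a b e h) (H' : SEmb b c e' h') :
    SEmb a c (fun σ => e' (e σ)) (fun t => h' (h t)) := by
  refine ⟨?_, ?_, ?_⟩
  · intro σ hσ
    exact (H'.len (by rw [H.len hσ, ← H.top]; exact H.h_mono hσ (le_refl _))).trans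
      (by rw [H.len hσ])
  · intro σ hσ j
    have s1 : e σ ++ [j] <+: e (σ ++ [j]) := H.step hσ j
    have l1 : (e σ).length < b := by
      rw [H.len (by omega), ← H.top]; exact H.h_strict (by omega) (le_refl _)
    calc e' (e σ) ++ [j] <+: e' (e σ ++ [j]) := H'.step l1 j
      _ <+: e' (e (σ ++ [j])) := H'.ext s1 (by
          rw [H.len (by simp; omega), ← H.top]
          exact H.h_mono (by simp; omega) (le_refl _))
  · show h' (h a) = c
    rw [H.top, H'.top]

end SEmb

/-! ### selector embeddings (restriction to a subset of levels) -/

def esel : (ℕ → ℕ) → List Bool → List Bool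
  | v, [] => List.replicate (v 0) false
  | v, b :: σ => List.replicate (v 0) false ++ b :: esel (fun t => v (t+1) - (v 0 + 1)) σ

theorem esel_shift_strictMono {v : ℕ → ℕ} (hv : StrictMono v) :
    StrictMono (fun t => v (t+1) - (v 0 + 1)) := by
  intro s t hst
  have h1 : v (s+1) < v (t+1) := hv (by omega)
  have h2 : v 0 < v (s+1) := hv (by omega)
  simp only
  omega

theorem esel_len {v : ℕ → ℕ} (hv : StrictMono v) : ∀ σ : List Bool,
    (esel v σ).length = v σ.length := by
  intro σ
  induction σ generalizing v with
  | nil => simp [esel]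
  | cons b σ ih =>
    have h2 : v 0 < v (σ.length + 1) := hv (by omega)
    simp [esel, ih (esel_shift_strictMono hv)]
    omega

theorem esel_step {v : ℕ → ℕ} : ∀ (σ : List Bool) (j : Bool),
    esel v σ ++ [j] <+: esel v (σ ++ [j]) := by
  intro σ
  induction σ generalizing v with
  | nil =>
    intro j
    show List.replicate (v 0) false ++ [j] <+: List.replicate (v 0) false ++ j :: _
    rw [List.prefix_append_right_inj]
    exact ⟨_, rfl⟩
  | cons b σ ih =>
    intro j
    show (List.replicate (v 0) false ++ b :: esel _ σ) ++ [j] <+: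
      List.replicate (v 0) false ++ b :: esel _ (σ ++ [j])
    rw [List.append_assoc, List.prefix_append_right_inj]
    exact List.cons_prefix_cons.2 ⟨rfl, ih _⟩

theorem esel_SEmb {v : ℕ → ℕ} (hv : StrictMono v) (D : ℕ) :
    SEmb D (v D) (esel v) v :=
  ⟨fun σ _ => esel_len hv σ, fun σ _ j => esel_step σ j, rfl⟩

/-! ### Quantitative Hales–Jewett (Shelah's proof) -/

def evalT {α : Type} (tmpl : List (Option α)) (a : α) : List α := tmpl.map (fun o => o.getD a)

@[simp] theorem evalT_len {α : Type} (tmpl : List (Option α)) (a : α) :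
    (evalT tmpl a).length = tmpl.length := by simp [evalT]

theorem evalT_append {α : Type} (t₁ t₂ : List (Option α)) (a : α) :
    evalT (t₁ ++ t₂) a = evalT t₁ a ++ evalT t₂ a := by simp [evalT]

section Shelah

variable {α : Type} [DecidableEq α] {C : Type}

/-- block word -/
def wd (TOP SEC : α) (m s s' : ℕ) (a : α) : List α :=
  List.replicate s TOP ++ List.replicate (s' - s) a ++ List.replicate (m - s') SEC

def stair (TOP SEC : α) (m s : ℕ) : List α :=
  List.replicate s TOP ++ List.replicate (m - s) SEC

theorem wd_len {TOP SEC : α} {m s s' : ℕ} (h1 : s ≤ s') (h2 : s' ≤ m) (a : α) :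
    (wd TOP SEC m s s' a).length = m := by simp [wd]; omega

theorem wd_top (TOP SEC : α) {m s s' : ℕ} (h1 : s ≤ s') :
    wd TOP SEC m s s' TOP = stair TOP SEC m s' := by
  have : s' = s + (s' - s) := by omega
  rw [stair, this, List.replicate_add]
  simp [wd]

theorem wd_sec (TOP SEC : α) {m s s' : ℕ} (h1 : s ≤ s') (h2 : s' ≤ m) :
    wd TOP SEC m s s' SEC = stair TOP SEC m s := by
  have : m - s = (s' - s) + (m - s') := by omega
  rw [stair, this, List.replicate_add]
  simp [wd]

def evalWs (TOP SEC : α) (mf : ℕ → ℕ) : ℕ → List (ℕ × ℕ) → List α → List α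
  | _, [], _ => []
  | _, _ :: _, [] => []
  | Q, (s,s') :: ws, a :: as => wd TOP SEC (mf Q) s s' a ++ evalWs TOP SEC mf (Q + mf Q) ws as

def OKd (mf : ℕ → ℕ) : ℕ → List (ℕ × ℕ) → Prop
  | _, [] => True
  | Q, (s,s') :: ws => (s < s' ∧ s' ≤ mf Q) ∧ OKd mf (Q + mf Q) ws

def PROPd (TOP SEC : α) (mf : ℕ → ℕ) (χ : List α → C) : ℕ → List (ℕ × ℕ) → Prop
  | _, [] => True
  | Q, (s,s') :: ws =>
      (∀ y : List α, y.length = Q → ∀ as : List α, as.length = ws.length →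
        χ (y ++ (wd TOP SEC (mf Q) s s' TOP ++ evalWs TOP SEC mf (Q + mf Q) ws as)) =
        χ (y ++ (wd TOP SEC (mf Q) s s' SEC ++ evalWs TOP SEC mf (Q + mf Q) ws as))) ∧
      PROPd TOP SEC mf χ (Q + mf Q) ws

theorem evalWs_len (TOP SEC : α) (mf : ℕ → ℕ) :
    ∀ (ws : List (ℕ × ℕ)) (Q : ℕ) (as : List α), OKd mf Q ws → as.length = ws.length →
      (evalWs TOP SEC mf Q ws as).length + Q = (fun P => P + mf P)^[ws.length] Q := by
  intro ws
  induction ws with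
  | nil => intro Q as _ _; simp [evalWs]
  | cons p ws ih =>
    rcases p with ⟨s, s'⟩
    intro Q as hok hlen
    cases as with
    | nil => simp at hlen
    | cons a as =>
      rcases hok with ⟨⟨h1, h2⟩, hok'⟩
      have := ih (Q + mf Q) as hok' (by simpa using hlen)
      simp only [List.length_cons]
      rw [Function.iterate_succ_apply]
      simp only [evalWs, List.length_append, wd_len (le_of_lt h1) h2]
      omega

/-- `List.ofFn` of the canonical function of a list of known length -/
theorem ofFn_eq {Q : ℕ} (y : List α) (h : y.length = Q) :
    List.ofFn (fun i : Fin Q => y.get (Fin.cast h.symm i)) = y := by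
  subst h; simp [List.ofFn_get]

variable [Fintype α] [Fintype C]

/-- the exponential block size -/
def mfS (r k n' : ℕ) : ℕ → ℕ := fun Q => r ^ ((k+2) ^ (Q + n'))

theorem suffix_ex (k n' : ℕ) (TOP SEC : α) (hcard : Fintype.card α = k + 2)
    (χ : List α → C) :
    ∀ (j Q : ℕ), j ≤ n' → ∃ ws : List (ℕ × ℕ), ws.length = j ∧
      OKd (mfS (Fintype.card C) k n') Q ws ∧
      PROPd TOP SEC (mfS (Fintype.card C) k n') χ Q ws := by
  intro j
  induction j with
  | zero => intro Q _; exact ⟨[], rfl, trivial, trivial⟩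
  | succ j ih =>
    intro Q hj
    set r := Fintype.card C with hr
    set mf := mfS r k n' with hmf
    obtain ⟨ws', hlen', hok', hprop'⟩ := ih (Q + mf Q) (by omega)
    haveI : Nonempty C := ⟨χ []⟩
    have hC1 : 1 ≤ r := Fintype.card_pos
    -- pigeonhole on staircases
    set m := mf Q with hm
    have hcardlt : Fintype.card ((Fin Q → α) → (Fin j → α) → C) < Fintype.card (Fin (m+1)) := by
      rw [Fintype.card_fin]
      have e1 : Fintype.card ((Fin Q → α) → (Fin j → α) → C)
          = r ^ ((k+2) ^ j * (k+2) ^ Q) := by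
        simp only [Fintype.card_fun, Fintype.card_fin, hcard, ← pow_mul, ← hr]
      rw [e1]
      have hmQ : m = r ^ ((k+2) ^ (Q + n')) := rfl
      have e2 : (k+2) ^ j * (k+2) ^ Q ≤ (k+2) ^ (Q + n') := by
        rw [← pow_add]
        exact Nat.pow_le_pow_right (by omega) (by omega)
      calc r ^ ((k+2) ^ j * (k+2) ^ Q) ≤ r ^ ((k+2) ^ (Q + n')) :=
            Nat.pow_le_pow_right hC1 e2
        _ < m + 1 := by omega
    obtain ⟨s, t, hst, hslice⟩ := Fintype.exists_ne_map_eq_of_card_lt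
      (fun s : Fin (m+1) => fun (fy : Fin Q → α) (fas : Fin j → α) =>
        χ (List.ofFn fy ++ (stair TOP SEC m (s : ℕ) ++
          evalWs TOP SEC mf (Q + m) ws' (List.ofFn fas))))
      hcardlt
    have key : ∃ s₀ t₀ : Fin (m+1), (s₀:ℕ) < (t₀:ℕ) ∧
        (fun (fy : Fin Q → α) (fas : Fin j → α) =>
          χ (List.ofFn fy ++ (stair TOP SEC m (s₀ : ℕ) ++
            evalWs TOP SEC mf (Q + m) ws' (List.ofFn fas)))) =
        (fun (fy : Fin Q → α) (fas : Fin j → α) =>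
          χ (List.ofFn fy ++ (stair TOP SEC m (t₀ : ℕ) ++
            evalWs TOP SEC mf (Q + m) ws' (List.ofFn fas)))) := by
      rcases lt_or_gt_of_ne hst with h | h
      · exact ⟨s, t, h, hslice⟩
      · exact ⟨t, s, h, hslice.symm⟩
    obtain ⟨s₀, t₀, hlt, hkey⟩ := key
    refine ⟨((s₀ : ℕ), (t₀ : ℕ)) :: ws', by simpa using hlen', ⟨⟨hlt, by omega⟩, hok'⟩, ?_, hprop'⟩
    intro y hy as has
    rw [wd_top TOP SEC (le_of_lt hlt), wd_sec TOP SEC (le_of_lt hlt) (by omega)]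
    have has' : as.length = j := by rw [has, hlen']
    have h1 := congrFun (congrFun hkey (fun i : Fin Q => y.get (Fin.cast hy.symm i)))
      (fun i : Fin j => as.get (Fin.cast has'.symm i))
    rw [ofFn_eq y hy, ofFn_eq as has'] at h1
    exact h1.symm

/-- replace `TOP` by `SEC` -/
def t2s (TOP SEC : α) (a : α) : α := if a = TOP then SEC else a

theorem chain (TOP SEC : α) (mf : ℕ → ℕ) (χ : List α → C) :
    ∀ (ws : List (ℕ × ℕ)) (Q : ℕ), OKd mf Q ws → PROPd TOP SEC mf χ Q ws →
      ∀ y : List α, y.length = Q → ∀ as : List α, as.length = ws.length →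
        χ (y ++ evalWs TOP SEC mf Q ws as) =
        χ (y ++ evalWs TOP SEC mf Q ws (as.map (t2s TOP SEC))) := by
  intro ws
  induction ws with
  | nil => intro Q _ _ y _ as _; cases as <;> rfl
  | cons p ws ih =>
    rcases p with ⟨s, s'⟩
    intro Q hok hprop y hy as has
    cases as with
    | nil => simp at has
    | cons a as =>
      rcases hok with ⟨⟨h1, h2⟩, hok'⟩
      rcases hprop with ⟨hph, hpt⟩
      have has' : as.length = ws.length := by simpa using has
      have hylen : (y ++ wd TOP SEC (mf Q) s s' a).length = Q + mf Q := by
        simp [wd_len (le_of_lt h1) h2, hy]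
      -- step 1: fix the tail
      have st1 : χ (y ++ evalWs TOP SEC mf Q ((s,s') :: ws) (a :: as)) =
          χ (y ++ (wd TOP SEC (mf Q) s s' a ++
            evalWs TOP SEC mf (Q + mf Q) ws (as.map (t2s TOP SEC)))) := by
        show χ (y ++ (wd TOP SEC (mf Q) s s' a ++ evalWs TOP SEC mf (Q + mf Q) ws as)) = _
        rw [← List.append_assoc, ← List.append_assoc]
        exact ih (Q + mf Q) hok' hpt _ hylen as has'
      rw [st1]
      by_cases ha : a = TOP
      · show _ = χ (y ++ (wd TOP SEC (mf Q) s s' (t2s TOP SEC a) ++ _))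
        rw [ha, show t2s TOP SEC TOP = SEC from if_pos rfl]
        exact hph y hy (as.map (t2s TOP SEC)) (by simpa using has')
      · show _ = χ (y ++ (wd TOP SEC (mf Q) s s' (t2s TOP SEC a) ++ _))
        rw [show t2s TOP SEC a = a from if_neg ha]

/-- lift a template over `β` to a template over `α` through the block words -/
def buildT {β : Type} (TOP SEC : α) (emb : β → α) (mf : ℕ → ℕ) :
    ℕ → List (ℕ × ℕ) → List (Option β) → List (Option α)
  | _, [], _ => []
  | _, _ :: _, [] => []
  | Q, (s,s') :: ws, o :: tβ =>
    (match o with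
     | some c => (wd TOP SEC (mf Q) s s' (emb c)).map some
     | none => (List.replicate s (some TOP)) ++ List.replicate (s' - s) (none : Option α)
               ++ List.replicate (mf Q - s') (some SEC))
    ++ buildT TOP SEC emb mf (Q + mf Q) ws tβ

theorem buildT_eval {β : Type} (TOP SEC : α) (emb : β → α) (mf : ℕ → ℕ) :
    ∀ (ws : List (ℕ × ℕ)) (Q : ℕ) (tβ : List (Option β)) (a : α), tβ.length = ws.length →
      evalT (buildT TOP SEC emb mf Q ws tβ) a =
        evalWs TOP SEC mf Q ws (tβ.map (fun o => (o.map emb).getD a)) := by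
  intro ws
  induction ws with
  | nil => intro Q tβ a h; rw [List.length_eq_zero_iff.1 h]; rfl
  | cons p ws ih =>
    rcases p with ⟨s, s'⟩
    intro Q tβ a h
    cases tβ with
    | nil => simp at h
    | cons o tβ =>
      show evalT (_ ++ _) a = _
      rw [evalT_append, ih (Q + mf Q) tβ a (by simpa using h)]
      show _ ++ _ = wd TOP SEC (mf Q) s s' ((o.map emb).getD a) ++ _
      congr 1
      cases o with
      | some c => simp [evalT, wd]
      | none => simp [evalT, wd, List.map_replicate]

theorem buildT_none {β : Type} (TOP SEC : α) (emb : β → α) (mf : ℕ → ℕ) :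
    ∀ (ws : List (ℕ × ℕ)) (Q : ℕ) (tβ : List (Option β)), tβ.length = ws.length →
      OKd mf Q ws → none ∈ tβ → none ∈ buildT TOP SEC emb mf Q ws tβ := by
  intro ws
  induction ws with
  | nil => intro Q tβ h _ hmem; rw [List.length_eq_zero_iff.1 h] at hmem; simp at hmem
  | cons p ws ih =>
    rcases p with ⟨s, s'⟩
    intro Q tβ h hok hmem
    cases tβ with
    | nil => simp at hmem
    | cons o tβ =>
      rcases hok with ⟨⟨h1, _⟩, hok'⟩
      show none ∈ _ ++ _
      rw [List.mem_append]
      rcases List.mem_cons.1 hmem with ho | ho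
      · left
        rw [← ho]
        show (none : Option α) ∈ _ ++ _ ++ _
        rw [List.mem_append, List.mem_append]
        left; right
        exact List.mem_replicate.2 ⟨by omega, rfl⟩
      · right; exact ih (Q + mf Q) tβ (by simpa using h) hok' ho

end Shelah

/-- Quantitative Hales–Jewett theorem, Shelah-style, with the explicit bound `shB`. -/
theorem sh_main : ∀ (k : ℕ) (α : Type) (instα : Fintype α) (instd : DecidableEq α)
    (C : Type) (instC : Fintype C), Fintype.card α = k → ∀ χ : List α → C,
    ∃ tmpl : List (Option α), tmpl.length = shB k (Fintype.card C) ∧ none ∈ tmpl ∧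
      ∀ a b : α, χ (evalT tmpl a) = χ (evalT tmpl b) := by
  intro k
  induction k using Nat.strong_induction_on with
  | _ k IH =>
    intro α instα instd C instC hcard χ
    match k, hcard with
    | 0, hcard =>
      refine ⟨[none], rfl, by simp, ?_⟩
      intro a b
      haveI := Fintype.card_eq_zero_iff.1 hcard
      exact (IsEmpty.false a).elim
    | 1, hcard =>
      refine ⟨[none], rfl, by simp, ?_⟩
      intro a b
      haveI := Fintype.card_le_one_iff.1 (le_of_eq hcard)
      rw [this a b]
    | (k+2), hcard =>
      obtain ⟨TOP, SEC', hTS⟩ := Fintype.exists_pair_of_one_lt_card (by rw [hcard]; omega)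
      set β := {x : α // x ≠ TOP} with hβ
      haveI instβ : Fintype β := by infer_instance
      haveI : DecidableEq β := by infer_instance
      have hcardβ : Fintype.card β = k + 1 := by
        have := Fintype.card_subtype_compl (fun x : α => x = TOP)
        simp only [Fintype.card_subtype_eq] at this
        have e : Fintype.card β = Fintype.card {x : α // ¬ x = TOP} := rfl
        rw [e, this, hcard]
        omega
      set SEC : α := SEC' with hSEC'
      have hST : SEC ≠ TOP := Ne.symm hTS
      set SECβ : β := ⟨SEC, hST⟩ with hSECβ
      set r := Fintype.card C with hr
      set n' := shB (k+1) r with hn'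
      set mf := mfS r k n' with hmf
      obtain ⟨ws, hwslen, hok, hprop⟩ := suffix_ex k n' TOP SEC hcard χ n' 0 (le_refl _)
      set χ' : List β → C := fun x => χ (evalWs TOP SEC mf 0 ws (x.map Subtype.val)) with hχ'
      obtain ⟨tβ, htβlen, htβnone, htβmono⟩ := IH (k+1) (by omega) β instβ ‹_› C instC hcardβ χ'
      have htβlen' : tβ.length = ws.length := by rw [htβlen, hwslen]
      refine ⟨buildT TOP SEC Subtype.val mf 0 ws tβ, ?_, ?_, ?_⟩
      · -- length
        have h1 := evalT_len (buildT TOP SEC Subtype.val mf 0 ws tβ) TOP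
        rw [buildT_eval TOP SEC Subtype.val mf ws 0 tβ TOP htβlen'] at h1
        have h2 := evalWs_len TOP SEC mf ws 0 (tβ.map (fun o => (o.map Subtype.val).getD TOP))
          hok (by simpa using htβlen')
        rw [← h1]
        rw [Nat.add_zero] at h2
        rw [h2, hwslen]
        rfl
      · exact buildT_none TOP SEC Subtype.val mf ws 0 tβ htβlen' hok htβnone
      · -- monochromatic
        have main : ∀ a : α, χ (evalT (buildT TOP SEC Subtype.val mf 0 ws tβ) a) =
            χ' (evalT tβ SECβ) := by
          intro a
          rw [buildT_eval TOP SEC Subtype.val mf ws 0 tβ a htβlen']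
          by_cases ha : a = TOP
          · rw [ha]
            have hc := chain TOP SEC mf χ ws 0 hok hprop [] rfl
              (tβ.map (fun o => (o.map Subtype.val).getD TOP)) (by simpa using htβlen')
            simp only [List.nil_append] at hc
            rw [hc]
            have e : (tβ.map (fun o => (o.map Subtype.val).getD TOP)).map (t2s TOP SEC) =
                (evalT tβ SECβ).map Subtype.val := by
              rw [List.map_map]
              show _ = (tβ.map _).map _
              rw [List.map_map]
              refine List.map_congr_left ?_
              intro o _
              cases o with
              | some c =>
                show t2s TOP SEC (c : α) = (c : α)
                exact if_neg c.2
              | none =>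
                show t2s TOP SEC TOP = SEC
                exact if_pos rfl
            rw [e]
          · have e : tβ.map (fun o => (o.map Subtype.val).getD a) =
                (evalT tβ ⟨a, ha⟩).map Subtype.val := by
              show _ = (tβ.map _).map _
              rw [List.map_map]
              refine List.map_congr_left ?_
              intro o _
              cases o with
              | some c => rfl
              | none => rfl
            rw [e]
            exact htβmono ⟨a, ha⟩ SECβ
        intro a b
        rw [main a, main b]

/-! ### main recursion: `q` complete trees, pair colors level-determined within
  each tree, constant across trees -/

/-- split a list at its first `none` -/
theorem exists_first_none {γ : Type} : ∀ (l : List (Option γ)), none ∈ l →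
    ∃ pre post, l = pre ++ none :: post ∧ ∀ o ∈ pre, o ≠ none := by
  intro l
  induction l with
  | nil => intro h; simp at h
  | cons o l ih =>
    intro h
    by_cases ho : o = (none : Option γ)
    · exact ⟨[], l, by rw [ho]; rfl, by simp⟩
    · have : none ∈ l := by
        rcases List.mem_cons.1 h with h1 | h1
        · exact absurd h1.symm ho
        · exact h1
      obtain ⟨pre, post, hl, hpre⟩ := ih this
      exact ⟨o :: pre, post, by rw [hl]; rfl, by
        intro o' ho'
        rcases List.mem_cons.1 ho' with h1 | h1
        · rw [h1]; exact ho
        · exact hpre o' h1⟩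

theorem option_track {γ : Type} (o : Option (γ → Bool)) (s : γ → Bool) (t : γ) :
    (o.getD s) t = ((o.map (fun f => f t)).getD (s t)) := by cases o <;> rfl

theorem ofFn_getD {γ : Type} {M : ℕ} (l : List γ) (hl : l.length = M) (d : γ) :
    List.ofFn (fun i : Fin M => l.getD i d) = l := by
  subst hl
  have : ∀ i : Fin l.length, l.getD i d = l.get i := by
    intro i; rw [List.getD_eq_getElem l d i.2]; simp
  rw [funext this, List.ofFn_get]

/-- assembled embedding -/
def asmE (preT : List Bool) (trk : Bool → List Bool) (E₀ : Bool → List Bool → List Bool) :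
    List Bool → List Bool
  | [] => preT
  | b :: σ' => trk b ++ E₀ b σ'

@[simp] theorem asmE_nil (preT trk E₀) : asmE preT trk E₀ [] = preT := rfl
@[simp] theorem asmE_cons (preT trk E₀ b σ') :
    asmE preT trk E₀ (b :: σ') = trk b ++ E₀ b σ' := rfl

def asmH (μ M : ℕ) (h₀ : ℕ → ℕ) : ℕ → ℕ
  | 0 => μ
  | Nat.succ k => M + h₀ k

@[simp] theorem asmH_zero (μ M h₀) : asmH μ M h₀ 0 = μ := rfl
@[simp] theorem asmH_succ (μ M h₀ k) : asmH μ M h₀ (k+1) = M + h₀ k := rfl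

def asmG {r : ℕ} (v0 : Fin r) (g1 : ℕ → Fin r) : ℕ → Fin r
  | 0 => v0
  | Nat.succ k => g1 k

@[simp] theorem asmG_zero {r} (v0 : Fin r) (g1) : asmG v0 g1 0 = v0 := rfl
@[simp] theorem asmG_succ {r} (v0 : Fin r) (g1 k) : asmG v0 g1 (k+1) = g1 k := rfl

theorem mgm : ∀ (L : ℕ) (ι : Type) (instι : Fintype ι) (instd : DecidableEq ι) (r K : ℕ),
    mgmIn (Fintype.card ι) r L ≤ K →
    ∀ (Γ : ι → ι → List Bool → List Bool → Fin r),
    (∀ t x y, Γ t t x y = Γ t t y x) →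
    ∃ (E : ι → List Bool → List Bool) (h : ℕ → ℕ) (g : ι → ℕ → Fin r) (V : ι → ι → Fin r),
      (∀ t, SEmb L K (E t) h) ∧
      (∀ t (x y : List Bool), x.length = L → y.length = L → x ≠ y →
        Γ t t (E t x) (E t y) = g t (cpl x y)) ∧
      (∀ t t', t ≠ t' → ∀ (x y : List Bool), x.length = L → y.length = L →
        Γ t t' (E t x) (E t' y) = V t t') := by
  intro L
  induction L with
  | zero =>
    intro ι instι instd r K _ Γ _
    refine ⟨fun _ _ => List.replicate K false, fun _ => K, fun t _ => Γ t t [] [],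
      fun t t' => Γ t t' (List.replicate K false) (List.replicate K false), ?_, ?_, ?_⟩
    · intro t
      refine ⟨?_, ?_, rfl⟩
      · intro σ hσ; simp
      · intro σ hσ; omega
    · intro t x y hx hy hne
      exact absurd (by rw [List.length_eq_zero_iff.1 hx, List.length_eq_zero_iff.1 hy]) hne
    · intro t t' _ x y hx hy
      rw [List.length_eq_zero_iff.1 hx, List.length_eq_zero_iff.1 hy]
  | succ L IH =>
    intro ι instι instd r K hK Γ hsym
    set q := Fintype.card ι with hq
    set M := Mstep q r L with hM
    have hKsplit : M + mgmIn (q * 2 ^ M) r L ≤ K := by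
      rw [hM, ← mgmIn_succ]; exact hK
    -- the recursive call on all candidate subtrees
    set κ := ι × (Fin M → Bool) with hκ
    have hcardκ : Fintype.card κ = q * 2 ^ M := by
      simp [hκ, Fintype.card_prod, Fintype.card_fun, hq]
    set Γ' : κ → κ → List Bool → List Bool → Fin r := fun tw tw' x y =>
      Γ tw.1 tw'.1 (List.ofFn tw.2 ++ x) (List.ofFn tw'.2 ++ y) with hΓ'
    obtain ⟨E₀, h₀, g₀, V₀, hsemb₀, hwit₀, hcross₀⟩ :=
      IH κ inferInstance inferInstance r (K - M)
        (by rw [hcardκ]; omega)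
        Γ' (by intro tw x y; exact hsym tw.1 _ _)
    -- Hales–Jewett on the candidate tuples
    set candOf : ι → List (ι → Bool) → (Fin M → Bool) :=
      fun t p => fun i => (p.getD i (fun _ => false)) t with hcandOf
    set Φ : List (ι → Bool) → ((ι → (Fin L → Fin r)) × (ι → ι → Fin r)) := fun p =>
      (fun t => fun k : Fin L => g₀ (t, candOf t p) k,
       fun t t' => V₀ (t, candOf t p) (t', candOf t' p)) with hΦ
    have hcardα : Fintype.card (ι → Bool) = 2 ^ q := by
      rw [Fintype.card_fun, Fintype.card_bool, ← hq]
    obtain ⟨tmpl, htlen, htnone, htmono⟩ :=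
      sh_main (2 ^ q) (ι → Bool) inferInstance inferInstance
        ((ι → (Fin L → Fin r)) × (ι → ι → Fin r)) inferInstance hcardα Φ
    have hcardCl : Fintype.card ((ι → (Fin L → Fin r)) × (ι → ι → Fin r))
        = r ^ (L * q + q * q) := by
      simp only [Fintype.card_prod, Fintype.card_fun, Fintype.card_fin, ← hq]
      rw [← pow_mul, ← pow_mul, ← pow_add]
    have htlenM : tmpl.length = M := by
      rw [htlen, hcardCl]; rfl
    obtain ⟨pre, post, htsplit, hprenone⟩ := exists_first_none tmpl htnone
    set μ := pre.length with hμ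
    have hμM : μ < M := by
      rw [← htlenM, htsplit]
      simp [hμ]
    -- tracks
    set trkL : ι → Bool → List Bool :=
      fun t b => tmpl.map (fun o => ((o.map (fun s => s t)).getD b)) with htrkL
    have htrklen : ∀ t b, (trkL t b).length = M := by
      intro t b; rw [htrkL]; simp [htlenM]
    set preT : ι → List Bool :=
      fun t => pre.map (fun o => ((o.map (fun s => s t)).getD false)) with hpreT
    have hpreTlen : ∀ t, (preT t).length = μ := by intro t; simp [hpreT, hμ]
    have htrk_split : ∀ t b, trkL t b =
        preT t ++ b :: post.map (fun o => ((o.map (fun s => s t)).getD b)) := by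
      intro t b
      simp only [htrkL, hpreT]
      rw [htsplit, List.map_append, List.map_cons]
      congr 1
      refine List.map_congr_left ?_
      intro o ho
      rcases o with _ | c
      · exact absurd rfl (hprenone _ ho)
      · rfl
    -- candidates
    set wcand : ι → Bool → (Fin M → Bool) :=
      fun t b => fun i => (trkL t b).getD i false with hwcand
    have hofn : ∀ t b, List.ofFn (wcand t b) = trkL t b := by
      intro t b; exact ofFn_getD _ (htrklen t b) false
    -- the two candidates of a tree are distinct
    have hwμ : ∀ t b, wcand t b ⟨μ, hμM⟩ = b := by
      intro t b
      show (trkL t b).getD μ false = b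
      rw [htrk_split t b,
        List.getD_append_right (preT t) _ false μ (by rw [hpreTlen t]), hpreTlen t]
      simp
    have hwne : ∀ t, wcand t false ≠ wcand t true := by
      intro t hcontra
      have := congrFun hcontra ⟨μ, hμM⟩
      rw [hwμ, hwμ] at this
      simp at this
    -- track extraction from evaluated templates
    have hcand_eval : ∀ (t : ι) (s : ι → Bool), candOf t (evalT tmpl s) = wcand t (s t) := by
      intro t s
      funext i
      show ((evalT tmpl s).getD i (fun _ => false)) t = (trkL t (s t)).getD i false
      unfold evalT
      rw [List.getD_eq_getElem _ _ (by simp [evalT, htlenM]),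
          List.getD_eq_getElem _ _ (by rw [htrklen]; exact i.2)]
      simp only [htrkL, evalT, List.getElem_map]
      exact option_track _ s t
    -- consequences of monochromaticity
    have hG : ∀ (t : ι) (b : Bool) (k : Fin L),
        g₀ (t, wcand t b) k = g₀ (t, wcand t false) k := by
      intro t b k
      have := htmono (fun _ => b) (fun _ => false)
      have h1 := congrFun (congrArg Prod.fst this) t
      have h2 := congrFun h1 k
      simp only [hΦ] at h2
      rw [hcand_eval, hcand_eval] at h2
      exact h2
    have hVc : ∀ (t t' : ι), t ≠ t' → ∀ (b b' : Bool),
        V₀ (t, wcand t b) (t', wcand t' b') = V₀ (t, wcand t false) (t', wcand t' false) := by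
      intro t t' hne b b'
      have := htmono (fun u => if u = t then b else b') (fun _ => false)
      have h1 := congrFun (congrFun (congrArg Prod.snd this) t) t'
      simp only [hΦ] at h1
      rw [hcand_eval, hcand_eval, hcand_eval, hcand_eval] at h1
      rw [if_pos rfl, if_neg (Ne.symm hne)] at h1
      exact h1
    -- assembly
    have hMK : M ≤ K := by omega
    refine ⟨fun t => asmE (preT t) (trkL t) (fun b => E₀ (t, wcand t b)),
      asmH μ M h₀,
      fun t => asmG (V₀ (t, wcand t false) (t, wcand t true)) (g₀ (t, wcand t false)),
      fun t t' => V₀ (t, wcand t false) (t', wcand t' false), ?_, ?_, ?_⟩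
    · -- strong embeddings
      intro t
      refine ⟨?_, ?_, ?_⟩
      · intro σ hσ
        cases σ with
        | nil => simp [hpreTlen t]
        | cons b σ' =>
          simp only [asmE_cons, List.length_append, List.length_cons, asmH_succ, htrklen]
          rw [(hsemb₀ (t, wcand t b)).1 σ' (by simp at hσ; omega)]
      · intro σ hσ j
        cases σ with
        | nil =>
          show preT t ++ [j] <+: trkL t j ++ E₀ (t, wcand t j) []
          have hp : preT t ++ [j] <+: trkL t j := by
            rw [htrk_split t j]
            exact ⟨List.map (fun o => (Option.map (fun s => s t) o).getD j) post, by simp⟩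
          exact hp.trans (List.prefix_append _ _)
        | cons b σ' =>
          show (trkL t b ++ E₀ (t, wcand t b) σ') ++ [j] <+:
            trkL t b ++ E₀ (t, wcand t b) (σ' ++ [j])
          rw [List.append_assoc, List.prefix_append_right_inj]
          exact (hsemb₀ (t, wcand t b)).2.1 σ' (by simp at hσ; omega) j
      · show M + h₀ L = K
        rw [(hsemb₀ (t, wcand t false)).2.2]
        omega
    · -- within-tree colors are level-determined
      intro t x y hx hy hne
      cases x with
      | nil => simp at hx
      | cons b σ' =>
      cases y with
      | nil => simp at hy
      | cons c τ' =>
      have hσ'len : σ'.length = L := by simpa using hx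
      have hτ'len : τ'.length = L := by simpa using hy
      by_cases hbc : b = c
      · subst hbc
        have hne' : σ' ≠ τ' := by intro hcontra; exact hne (by rw [hcontra])
        have hclt : cpl σ' τ' < L := by
          have := cpl_lt_length (x := σ') (y := τ') (by omega) hne'
          omega
        simp only [asmE_cons, cpl_cons_same, asmG_succ]
        rw [← hofn t b]
        have hyp := hwit₀ (t, wcand t b) σ' τ' hσ'len hτ'len hne'
        simp only [hΓ'] at hyp
        rw [hyp]
        exact hG t b ⟨cpl σ' τ', hclt⟩
      · have hwbc : wcand t b ≠ wcand t c := by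
          intro hcontra
          have h1 := congrFun hcontra ⟨μ, hμM⟩
          rw [hwμ, hwμ] at h1
          exact hbc h1
        have hne2 : ((t, wcand t b) : κ) ≠ (t, wcand t c) := by
          intro hcontra
          exact hwbc (congrArg Prod.snd hcontra)
        simp only [asmE_cons, cpl_cons_ne hbc, asmG_zero]
        rw [← hofn t b, ← hofn t c]
        have hyp := hcross₀ (t, wcand t b) (t, wcand t c) hne2 σ' τ' hσ'len hτ'len
        simp only [hΓ'] at hyp
        rw [hyp]
        have hne2' : ((t, wcand t true) : κ) ≠ (t, wcand t false) := by
          intro hcontra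
          exact hwne t (congrArg Prod.snd hcontra).symm
        have hswap : V₀ (t, wcand t true) (t, wcand t false) =
            V₀ (t, wcand t false) (t, wcand t true) := by
          have e1 := hcross₀ (t, wcand t true) (t, wcand t false) hne2'
            (List.replicate L false) (List.replicate L false) (by simp) (by simp)
          have e2 := hcross₀ (t, wcand t false) (t, wcand t true) (Ne.symm hne2')
            (List.replicate L false) (List.replicate L false) (by simp) (by simp)
          simp only [hΓ'] at e1 e2
          rw [← e1, ← e2]
          exact hsym t _ _
        cases b <;> cases c
        · exact absurd rfl hbc
        · rfl
        · exact hswap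
        · exact absurd rfl hbc
    · -- cross-tree colors are constant
      intro t t' hne x y hx hy
      cases x with
      | nil => simp at hx
      | cons b σ' =>
      cases y with
      | nil => simp at hy
      | cons c τ' =>
      have hσ'len : σ'.length = L := by simpa using hx
      have hτ'len : τ'.length = L := by simpa using hy
      have hne2 : ((t, wcand t b) : κ) ≠ (t', wcand t' c) := by
        intro hcontra
        exact hne (congrArg Prod.fst hcontra)
      simp only [asmE_cons]
      rw [← hofn t b, ← hofn t' c]
      have hyp := hcross₀ (t, wcand t b) (t', wcand t' c) hne2 σ' τ' hσ'len hτ'len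
      simp only [hΓ'] at hyp
      rw [hyp]
      exact hVc t t' hne b c

/-! ### primitive recursiveness of the bounds -/

theorem primrec_pow : Primrec₂ (fun a b : ℕ => a ^ b) := Primrec₂.unpaired'.1 Nat.Primrec.pow

theorem shB_succ_eq (k r : ℕ) :
    shB (k+1) r = if k = 0 then 1 else (shStep (k-1) r (shB k r))^[shB k r] 0 := by
  match k with
  | 0 => rfl
  | (k+1) => simp [shB]

theorem shB_eq_rec (k r : ℕ) : shB k r = Nat.rec (motive := fun _ => ℕ) 1
    (fun k ih => if k = 0 then 1 else (shStep (k-1) r ih)^[ih] 0) k := by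
  induction k with
  | zero => rfl
  | succ k ih => rw [shB_succ_eq, ih]

theorem primrec_shStep : Primrec₂ (fun (a : (ℕ × ℕ × ℕ)) (P : ℕ) =>
    shStep a.1 a.2.1 a.2.2 P) := by
  unfold shStep
  have h1 : Primrec₂ (fun (a : (ℕ × ℕ × ℕ)) (P : ℕ) => a.2.1 ^ ((a.1 + 2) ^ (P + a.2.2))) := by
    apply Primrec₂.comp₂ primrec_pow
    · exact (Primrec.fst.comp (Primrec.snd.comp Primrec.fst)).to₂
    · apply Primrec₂.comp₂ primrec_pow
      · exact Primrec.nat_add.comp₂ ((Primrec.fst.comp Primrec.fst).to₂) (Primrec₂.const 2)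
      · exact Primrec.nat_add.comp₂ (Primrec.snd.to₂)
          ((Primrec.snd.comp (Primrec.snd.comp Primrec.fst)).to₂)
  exact Primrec.nat_add.comp₂ (Primrec.snd.to₂) h1

theorem primrec_shB : Primrec₂ shB := by
  have hiter : Primrec (fun a : ℕ × ℕ × ℕ => (shStep (a.2.1 - 1) a.1 a.2.2)^[a.2.2] 0) := by
    apply Primrec.nat_iterate
      (f := fun a : ℕ × ℕ × ℕ => a.2.2)
      (g := fun _ : ℕ × ℕ × ℕ => (0 : ℕ))
      (h := fun (a : ℕ × ℕ × ℕ) (P : ℕ) => shStep (a.2.1 - 1) a.1 a.2.2 P)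
    · exact Primrec.snd.comp Primrec.snd
    · exact Primrec.const 0
    · exact primrec_shStep.comp₂
        ((Primrec.pair
          (Primrec.nat_sub.comp (Primrec.fst.comp (Primrec.snd.comp Primrec.fst))
            (Primrec.const 1))
          (Primrec.pair (Primrec.fst.comp Primrec.fst)
            ((Primrec.snd.comp (Primrec.snd.comp Primrec.fst))))).to₂)
        (Primrec.snd.to₂)
  have hg : Primrec₂ (fun (r : ℕ) (p : ℕ × ℕ) =>
      if p.1 = 0 then 1 else (shStep (p.1 - 1) r p.2)^[p.2] 0) := by
    have hh : Primrec (fun a : ℕ × (ℕ × ℕ) =>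
        if a.2.1 = 0 then 1 else (shStep (a.2.1 - 1) a.1 a.2.2)^[a.2.2] 0) := by
      refine Primrec.ite (Primrec.eq.comp (Primrec.fst.comp Primrec.snd) (Primrec.const 0))
        (Primrec.const 1) ?_
      exact hiter
    exact hh.to₂
  have h := Primrec.nat_rec (f := fun _ : ℕ => (1:ℕ)) (Primrec.const 1) hg
  have h2 : Primrec₂ (fun (r k : ℕ) => shB k r) := by
    refine Primrec₂.of_eq h ?_
    intro r k
    exact (shB_eq_rec k r).symm
  exact h2.comp Primrec.snd Primrec.fst |>.to₂

theorem primrec_Mstep : Primrec (fun a : ℕ × ℕ × ℕ => Mstep a.1 a.2.1 a.2.2) := by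
  unfold Mstep
  apply primrec_shB.comp
  · exact primrec_pow.comp (Primrec.const 2) Primrec.fst
  · apply primrec_pow.comp (Primrec.fst.comp Primrec.snd)
    exact Primrec.nat_add.comp
      (Primrec.nat_mul.comp (Primrec.snd.comp Primrec.snd) Primrec.fst)
      (Primrec.nat_mul.comp Primrec.fst Primrec.fst)

theorem primrec_mgmIn : Primrec (fun a : ℕ × ℕ × ℕ => mgmIn a.1 a.2.1 a.2.2) := by
  unfold mgmIn
  have hM : Primrec (fun p : (ℕ × ℕ × ℕ) × (ℕ × ℕ × ℕ) => Mstep p.2.2.1 p.1.2.1 (p.2.1 - 1)) := by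
    have harg : Primrec (fun p : (ℕ × ℕ × ℕ) × (ℕ × ℕ × ℕ) =>
        ((p.2.2.1, p.1.2.1, p.2.1 - 1) : ℕ × ℕ × ℕ)) :=
      Primrec.pair (Primrec.fst.comp (Primrec.snd.comp Primrec.snd))
        ((Primrec.fst.comp (Primrec.snd.comp Primrec.fst)).pair
          (Primrec.nat_sub.comp (Primrec.fst.comp Primrec.snd) (Primrec.const 1)))
    exact primrec_Mstep.comp harg
  have hstep : Primrec₂ (fun (a : ℕ × ℕ × ℕ) (s : ℕ × ℕ × ℕ) => mgmStep a.2.1 s) := by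
    unfold mgmStep
    have hh : Primrec (fun p : (ℕ × ℕ × ℕ) × (ℕ × ℕ × ℕ) =>
        ((p.2.1 - 1, p.2.2.1 * 2 ^ (Mstep p.2.2.1 p.1.2.1 (p.2.1 - 1)),
          p.2.2.2 + Mstep p.2.2.1 p.1.2.1 (p.2.1 - 1)) : ℕ × ℕ × ℕ)) := by
      refine Primrec.pair ?_ (Primrec.pair ?_ ?_)
      · exact Primrec.nat_sub.comp (Primrec.fst.comp Primrec.snd) (Primrec.const 1)
      · exact Primrec.nat_mul.comp (Primrec.fst.comp (Primrec.snd.comp Primrec.snd))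
          (primrec_pow.comp (Primrec.const 2) hM)
      · exact Primrec.nat_add.comp (Primrec.snd.comp (Primrec.snd.comp Primrec.snd)) hM
    exact hh.to₂
  have hiter : Primrec (fun a : ℕ × ℕ × ℕ =>
      (mgmStep a.2.1)^[a.2.2] (a.2.2, a.1, 0)) := by
    apply Primrec.nat_iterate (Primrec.snd.comp Primrec.snd)
      (((Primrec.snd.comp Primrec.snd).pair (Primrec.fst.pair (Primrec.const 0))))
      hstep
  exact (Primrec.snd.comp Primrec.snd).comp hiter

/-- The final bound. -/
def Bnd (d ℓ : ℕ) : ℕ := mgmIn d 2 (2 ^ d * (ℓ - 1) + 1)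

theorem primrec_Bnd : Nat.Primrec (fun c : ℕ => Bnd c.unpair.1 c.unpair.2) := by
  rw [← Primrec.nat_iff]
  unfold Bnd
  have hu : Primrec (fun c : ℕ => c.unpair) := Primrec.unpair
  have harg : Primrec (fun c : ℕ =>
      ((c.unpair.1, 2, 2 ^ c.unpair.1 * (c.unpair.2 - 1) + 1) : ℕ × ℕ × ℕ)) := by
    refine Primrec.pair (Primrec.fst.comp hu) (Primrec.pair (Primrec.const 2) ?_)
    exact Primrec.nat_add.comp
      (Primrec.nat_mul.comp (primrec_pow.comp (Primrec.const 2) (Primrec.fst.comp hu))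
        (Primrec.nat_sub.comp (Primrec.snd.comp hu) (Primrec.const 1)))
      (Primrec.const 1)
  exact primrec_mgmIn.comp harg

/-- all boolean lists of length at most `n` -/
def blists (n : ℕ) : Finset (List Bool) :=
  (Finset.range (n+1)).biUnion
    (fun t => Finset.image (fun w : Fin t → Bool => List.ofFn w) Finset.univ)

theorem mem_blists {σ : List Bool} {n : ℕ} (h : σ.length ≤ n) : σ ∈ blists n := by
  rw [blists, Finset.mem_biUnion]
  refine ⟨σ.length, Finset.mem_range.2 (by omega), ?_⟩
  rw [Finset.mem_image]
  exact ⟨σ.get, Finset.mem_univ _, List.ofFn_get σ⟩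

/-- stabilization of a pair-coloring of leaves of a strong `d`-forest. -/
theorem stmt_13 :
    ∃ B : ℕ → ℕ → ℕ,
      Nat.Primrec (fun c : ℕ => B c.unpair.1 c.unpair.2) ∧
      ∀ d : ℕ, 1 ≤ d → ∀ ℓ : ℕ,
        ∀ (T : Fin d → Finset (List Bool)) (f : Fin d → List Bool → List Bool) (h : ℕ → ℕ),
          IsStrongForest d (B d ℓ) T f h →
          ∀ c : Finset (List Bool) → Fin 2,
            ∃ (S : Fin d → Finset (List Bool)) (fS : Fin d → List Bool → List Bool)
              (hS : ℕ → ℕ),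
              IsStrongForest d ℓ S fS hS ∧
              (∀ i : Fin d, Leaves ℓ (fS i) ⊆ Leaves (B d ℓ) (f i)) ∧
              ∀ i j : Fin d,
                ∀ σ ∈ Leaves ℓ (fS i), ∀ σ' ∈ Leaves ℓ (fS i),
                ∀ τ ∈ Leaves ℓ (fS j), ∀ τ' ∈ Leaves ℓ (fS j),
                  σ ≠ τ → σ' ≠ τ' → c {σ, τ} = c {σ', τ'} := by
  refine ⟨Bnd, primrec_Bnd, ?_⟩
  intro d _ ℓ T f h₀ hforest c
  set N := Bnd d ℓ with hN
  set Ltop := 2 ^ d * (ℓ - 1) + 1 with hLtop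
  -- the pulled-back coloring
  set Γ : Fin d → Fin d → List Bool → List Bool → Fin 2 :=
    fun i j x y => c {f i x, f j y} with hΓ
  have hsym : ∀ (t : Fin d) (x y : List Bool), Γ t t x y = Γ t t y x := by
    intro t x y
    simp only [hΓ]
    rw [Finset.pair_comm]
  obtain ⟨E, h₁, g, V, hsembs, hwit, hcross⟩ :=
    mgm Ltop (Fin d) inferInstance inferInstance 2 N
      (by rw [Fintype.card_fin]; exact le_of_eq rfl) Γ hsym
  -- pigeonhole on the levels: many levels with the same color pattern
  set lab : Fin Ltop → (Fin d → Fin 2) := fun k => fun i => g i k.val with hlab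
  have hcards : (Finset.univ : Finset (Fin d → Fin 2)).card * (ℓ - 1) <
      (Finset.univ : Finset (Fin Ltop)).card := by
    rw [Finset.card_univ, Finset.card_univ, Fintype.card_fun, Fintype.card_fin,
      Fintype.card_fin, Fintype.card_fin]
    omega
  obtain ⟨vec, _, hvec⟩ := Finset.exists_lt_card_fiber_of_mul_lt_card_of_maps_to
    (f := lab) (fun a _ => Finset.mem_univ _) hcards
  obtain ⟨A, hAsub, hAcard⟩ := Finset.exists_subset_card_eq
    (s := Finset.filter (fun x => lab x = vec) Finset.univ) (n := ℓ) (by omega)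
  set iso := A.orderIsoOfFin hAcard with hiso
  set v : ℕ → ℕ := fun t => if ht : t < ℓ then ((iso ⟨t, ht⟩ : Fin Ltop) : ℕ)
    else Ltop + (t - ℓ) with hv
  have hvlt : ∀ t (ht : t < ℓ), v t = ((iso ⟨t, ht⟩ : Fin Ltop) : ℕ) := by
    intro t ht; simp only [hv]; rw [dif_pos ht]
  have hvge : ∀ t, ℓ ≤ t → v t = Ltop + (t - ℓ) := by
    intro t ht; simp only [hv]; rw [dif_neg (by omega)]
  have hvmono : StrictMono v := by
    intro s t hst
    rcases Nat.lt_or_ge s ℓ with hs | hs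
    · rcases Nat.lt_or_ge t ℓ with ht | ht
      · rw [hvlt s hs, hvlt t ht]
        have := iso.strictMono (show (⟨s, hs⟩ : Fin ℓ) < ⟨t, ht⟩ from hst)
        exact_mod_cast this
      · rw [hvlt s hs, hvge t ht]
        have := ((iso ⟨s, hs⟩ : Fin Ltop)).isLt
        omega
    · rw [hvge s hs, hvge t (by omega)]
      omega
  have hvtop : v ℓ = Ltop := by rw [hvge ℓ (le_refl _)]; omega
  have hsel : SEmb ℓ Ltop (esel v) v := by
    have := esel_SEmb hvmono ℓ
    rw [hvtop] at this
    exact this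
  -- the labels are constant on the selected levels
  have hglab : ∀ (i : Fin d) (k : ℕ) (hk : k < ℓ), g i (v k) = vec i := by
    intro i k hk
    have hmem : (iso ⟨k, hk⟩ : Fin Ltop) ∈ A := (iso ⟨k, hk⟩).2
    have := hAsub hmem
    rw [Finset.mem_filter] at this
    have hl := congrFun this.2 i
    rw [hlab] at hl
    rw [hvlt k hk]
    exact hl
  -- the composed forest
  have hground : ∀ i, SEmb N (h₀ N) (f i) h₀ := by
    intro i
    exact ⟨fun σ hσ => (hforest.1 i σ hσ).2, hforest.2 i, rfl⟩
  have hfull : ∀ i, SEmb ℓ (h₀ N) (fun σ => f i (E i (esel v σ))) (fun t => h₀ (h₁ (v t))) := by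
    intro i
    exact (hsel.comp (hsembs i)).comp (hground i)
  set fS : Fin d → List Bool → List Bool := fun i σ => f i (E i (esel v σ)) with hfS
  refine ⟨fun i => (blists ℓ).image (fS i), fS, fun t => h₀ (h₁ (v t)), ?_, ?_, ?_⟩
  · constructor
    · intro i σ hσ
      constructor
      · exact Finset.mem_image.2 ⟨σ, mem_blists hσ, rfl⟩
      · exact (hfull i).len hσ
    · intro i σ hσ j
      exact (hfull i).step hσ j
  · intro i σ hσ
    obtain ⟨x, hx, hfx⟩ := hσ
    refine ⟨E i (esel v x), ?_, hfx⟩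
    have h1 : (esel v x).length = Ltop := by rw [esel_len hvmono, hx, hvtop]
    have h2 := (hsembs i).len (σ := esel v x) (by omega)
    rw [h2, h1, (hsembs i).top]
  · intro i j σ hσ σ' hσ' τ hτ τ' hτ' hne hne'
    obtain ⟨x, hx, hfx⟩ := hσ
    obtain ⟨x', hx', hfx'⟩ := hσ'
    obtain ⟨y, hy, hfy⟩ := hτ
    obtain ⟨y', hy', hfy'⟩ := hτ'
    have hlen : ∀ z : List Bool, z.length = ℓ → (esel v z).length = Ltop := by
      intro z hz; rw [esel_len hvmono, hz, hvtop]
    by_cases hij : i = j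
    · subst hij
      -- within one tree
      have key : ∀ (a b : List Bool), a.length = ℓ → b.length = ℓ → a ≠ b →
          c {fS i a, fS i b} = vec i := by
        intro a b ha hb hab
        have hne2 : esel v a ≠ esel v b := hsel.leaf_ne ha hb hab
        have := hwit i (esel v a) (esel v b) (hlen a ha) (hlen b hb) hne2
        rw [hsel.cpl_eq ha hb hab] at this
        have hclt : cpl a b < ℓ := by
          have := cpl_lt_length (x := a) (y := b) (by omega) hab
          omega
        rw [hglab i (cpl a b) hclt] at this
        exact this
      have hxy : x ≠ y := by
        intro hcontra
        exact hne (by rw [← hfx, ← hfy, hcontra])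
      have hxy' : x' ≠ y' := by
        intro hcontra
        exact hne' (by rw [← hfx', ← hfy', hcontra])
      rw [← hfx, ← hfy, ← hfx', ← hfy']
      rw [key x y hx hy hxy, key x' y' hx' hy' hxy']
    · -- two different trees
      have key : ∀ (a b : List Bool), a.length = ℓ → b.length = ℓ →
          c {fS i a, fS j b} = V i j := by
        intro a b ha hb
        exact hcross i j hij (esel v a) (esel v b) (hlen a ha) (hlen b hb)
      rw [← hfx, ← hfy, ← hfx', ← hfy']
      rw [key x y hx hy, key x' y' hx' hy']
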